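/- arXiv:2405.19918 — 2 statements merged into one kernel-verified Lean document; each statement's English description precedes it below -/
import Mathlib

section
/- For k ≥ r ≥ 3 and p,t ≥ 0, if π is a partition in C_<(k,r|p,t) such that π^{(2)}_p = 2t+4 with starting type s₃ (these are exactly the partitions in the subsets C^{(4)}_<(k,r|p,t) ∪ C^{(5)}_<(k,r|p,t)), then 2t+2 does not occur as a part of π. -/
namespace Bressoud

/-- A partition: a weakly decreasing list of positive integers. -/
structure Partition where
  parts : List ℕ
  pos : ∀ x ∈ parts, 0 < x
  sorted : parts.Pairwise (· ≥ ·)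

namespace Partition

/-- `|π|`, the sum of the parts of `π`. -/
def size (π : Partition) : ℕ := π.parts.sum

/-- `ℓ(π)`, the number of parts of `π`. -/
def numParts (π : Partition) : ℕ := π.parts.length

end Partition

lemma exists_pos_not_mem (s : List ℕ) : ∃ n, 0 < n ∧ n ∉ s := by
  refine ⟨s.sum + 1, Nat.succ_pos _, fun h => ?_⟩
  have := List.single_le_sum (l := s) (fun x _ => Nat.zero_le x) _ h
  omega

/-- The least positive integer not occurring in `s`. -/
def mex1 (s : List ℕ) : ℕ := Nat.find (exists_pos_not_mem s)

/-- Parts `p ≥ q` conflict (must receive different marks) when `p - q ≤ 2`,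
with strict inequality when `p` is odd. -/
def conflict (p q : ℕ) : Bool :=
  if p % 2 = 1 then decide (p - q < 2) else decide (p - q ≤ 2)

/-- Greedy computation of the Göllnitz–Gordon marking: the parts are processed
from smallest to largest (second argument: remaining parts in increasing
order; first argument: already processed parts with their marks), and each
part receives the least positive mark different from the marks of all already
processed conflicting parts. -/
def ggAux : List (ℕ × ℕ) → List ℕ → List (ℕ × ℕ)
  | acc, [] => acc
  | acc, p :: rest =>
      ggAux ((p, mex1 ((acc.filter fun q => conflict p q.1).map Prod.snd)) :: acc) rest

/-- The Göllnitz–Gordon marking `GG(π)` of `π`, as a list of (part, mark)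
pairs in decreasing order of parts. -/
def ggMarks (π : Partition) : List (ℕ × ℕ) := ggAux [] π.parts.reverse

/-- There is an `m`-marked part equal to `x` in `GG(π)`. -/
def Marked (π : Partition) (x m : ℕ) : Prop := (x, m) ∈ ggMarks π

instance (π : Partition) (x m : ℕ) : Decidable (Marked π x m) := by
  unfold Marked; infer_instance

/-- The `i`-th row of `GG(π)`: the `i`-marked parts, in decreasing order. -/
def row (π : Partition) (i : ℕ) : List ℕ :=
  ((ggMarks π).filter fun q => q.2 == i).map Prod.fst

/-- `N_i(π)`: the number of `i`-marked parts of `π`. -/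
def Nmk (π : Partition) (i : ℕ) : ℕ := (row π i).length

/-- `π^{(i)}_j` as a natural number (meaningful for `1 ≤ j ≤ N_i(π)`;
junk value `0` otherwise). -/
def nth (π : Partition) (i j : ℕ) : ℕ := (row π i).getD (j - 1) 0

/-- The canonical embedding of the natural numbers into `EReal`. -/
noncomputable def natE (n : ℕ) : EReal := ((n : ℝ) : EReal)

/-- `π^{(i)}_j` as an extended real, with the conventions `π^{(i)}_0 = +∞`
and `π^{(i)}_j = -∞` for `j > N_i(π)`. -/
noncomputable def rowVal (π : Partition) (i j : ℕ) : EReal :=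
  if j = 0 then ⊤
  else
    match (row π i)[j - 1]? with
    | some x => natE x
    | none => ⊥

/-- The largest `l ≥ 0` such that there is no odd part of `π` greater than or
equal to `π^{(2)}_l` (the indices `1 ≤ j ≤ N₂(π)` with this property form an
initial segment, so this is also their number). -/
def bigL (π : Partition) : ℕ :=
  ((List.range' 1 (Nmk π 2)).filter fun j =>
    decide (∀ x ∈ π.parts, x % 2 = 1 → x < nth π 2 j)).length

/-- `startPair π b = (starting type of π^{(2)}_b, s_b(π))` for `1 ≤ b ≤ N₂(π)`.
Starting types are encoded by integers: `-1` stands for `s₋₁`, and `0,1,2,3`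
for `s₀,s₁,s₂,s₃`; the value `9` is a junk value used when no case applies. -/
def startPair (π : Partition) : ℕ → ℤ × ℕ
  | 0 => (9, 0)
  | b + 1 =>
    let v := nth π 2 (b + 1)
    if bigL π < b + 1 then (-1, 0)
    else
      let okLow : Bool :=
        if b = 0 then !decide ((v + 2) ∈ π.parts)
        else !decide (Marked π (v + 2) 1) || decide ((startPair π b).2 = v + 2)
      let ok2 : Bool :=
        if b = 0 then decide (Marked π (v + 2) 1)
        else decide (Marked π (v + 2) 1) && !decide ((startPair π b).2 = v + 2)
      if decide (Marked π (v - 1) 1) && okLow then (0, v - 1)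
      else if decide (Marked π (v - 2) 1) && okLow then (1, v - 2)
      else if ok2 then (2, v + 2)
      else if decide (Marked π v 1) then (3, v)
      else (9, 0)

/-- The starting type of `π^{(2)}_b`, encoded as an integer. -/
def startType (π : Partition) (b : ℕ) : ℤ := (startPair π b).1

/-- The set `C(k,r)`: partitions with no repeated odd part, in which the parts
equal to `1` and `2` have marks at most `r - 1`, and whose Göllnitz–Gordon
marking has at most `k - 1` rows. -/
def C (k r : ℕ) : Set Partition :=
  { π | (∀ x, x % 2 = 1 → π.parts.count x ≤ 1) ∧
        (∀ x m, Marked π x m → x ≤ 2 → m ≤ r - 1) ∧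
        (∀ x m, Marked π x m → m ≤ k - 1) }

/-- The set `C_<(k,r|p,t)`. -/
noncomputable def Clt (k r p t : ℕ) : Set Partition :=
  { π | π ∈ C k r ∧
        (∀ x ∈ π.parts, x % 2 = 1 → x < 2 * t + 1) ∧
        rowVal π 2 (p + 1) < natE (2 * t + 1) ∧
        natE (2 * t + 1) < rowVal π 2 p ∧
        (rowVal π 2 p = natE (2 * t + 2) →
          startType π p = 2 ∨ startType π p = 3) ∧
        (rowVal π 2 (p + 1) = natE (2 * t) →
          startType π (p + 1) = 0 ∨ startType π (p + 1) = 1) }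

/-- The set `C_=(k,r|p,t)`. -/
noncomputable def Ceq (k r p t : ℕ) : Set Partition :=
  { π | π ∈ C k r ∧
        (2 * t + 1) ∈ π.parts ∧
        (∀ x ∈ π.parts, x % 2 = 1 → x ≤ 2 * t + 1) ∧
        (∀ m, Marked π (2 * t + 1) m → m ≤ 2) ∧
        natE (2 * t + 2) ≤ rowVal π 2 p ∧
        rowVal π 2 (p + 1) ≤ natE (2 * t + 2) ∧
        ((∃ j, 1 ≤ j ∧ j ≤ Nmk π 2 ∧ nth π 2 j = 2 * t + 2 ∧ startType π j = 0) →
          rowVal π 2 (p + 1) = natE (2 * t + 2) ∧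
          ∃ i, 1 ≤ i ∧ i ≤ p + 1 ∧
            nth π 2 i = 2 * t + 2 + 4 * (p + 1 - i) ∧
            π.parts.count (2 * t + 2 + 4 * (p + 1 - i)) = 1) ∧
        ((∃ j, 1 ≤ j ∧ j ≤ Nmk π 2 ∧ nth π 2 j = 2 * t + 2 ∧ startType π j = 2) →
          rowVal π 2 p = natE (2 * t + 2)) ∧
        ((2 * t + 2) ∈ π.parts → ¬ Marked π (2 * t + 2) 2 →
          rowVal π 2 p = natE (2 * t + 4) ∧ startType π p = 3 ∧
          ∃ i, 1 ≤ i ∧ i ≤ p ∧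
            nth π 2 i = 2 * t + 4 + 4 * (p - i) ∧
            (2 * t + 4 + 4 * (p - i) + 2) ∉ π.parts) }

/-- The first starting cluster index `p₁` of `π` (with `p₀ = p + 1`): the least
`j ≥ 1` such that `π^{(2)}_j = π^{(2)}_p + 4(p - j)` and all of
`π^{(2)}_j, …, π^{(2)}_p` have the same starting type as `π^{(2)}_p`. -/
def firstCluster (π : Partition) (p : ℕ) : ℕ :=
  ((List.range' 1 p).filter fun j =>
    (List.range' j (p + 1 - j)).all fun i =>
      decide (nth π 2 i = nth π 2 p + 4 * (p - i)) &&
      decide (startType π i = startType π p)).headD p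

/-- The set `ℰ(k,r)` of partitions in `C(k,r)` with no odd parts. -/
def E (k r : ℕ) : Set Partition :=
  { π | π ∈ C k r ∧ ∀ x ∈ π.parts, x % 2 = 0 }

/-- `C_<(k,r|m) = ⋃_{p+t=m} C_<(k,r|p,t)`. -/
noncomputable def Cltm (k r m : ℕ) : Set Partition :=
  { π | ∃ p t, p + t = m ∧ π ∈ Clt k r p t }

/-- `C_=(k,r|m) = ⋃_{p+t=m} C_=(k,r|p,t)`. -/
noncomputable def Ceqm (k r m : ℕ) : Set Partition :=
  { π | ∃ p t, p + t = m ∧ π ∈ Ceq k r p t }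

/-- `I_N`: partitions into distinct odd parts, each at least `2N + 1`. -/
def Iset (N : ℕ) : Set Partition :=
  { ζ | (∀ x ∈ ζ.parts, x % 2 = 1 ∧ 2 * N + 1 ≤ x) ∧ ζ.parts.Nodup }

/-- `F(3,3)`: pairs `(π, ζ)` with `π ∈ ℰ(3,3)` and `ζ ∈ I_{N₂(π)}`. -/
noncomputable def F33 : Set (Partition × Partition) :=
  { pq | pq.1 ∈ E 3 3 ∧ pq.2 ∈ Iset (Nmk pq.1 2) }


section Aux
lemma mex1_pos (s : List ℕ) : 0 < mex1 s := (Nat.find_spec (exists_pos_not_mem s)).1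

lemma mex1_not_mem (s : List ℕ) : mex1 s ∉ s := (Nat.find_spec (exists_pos_not_mem s)).2

lemma mem_of_lt_mex1 {s : List ℕ} {m : ℕ} (h0 : 0 < m) (h : m < mex1 s) : m ∈ s := by
  by_contra hm
  have := Nat.find_min' (exists_pos_not_mem s) ⟨h0, hm⟩
  rw [mex1] at h
  omega

/-- Invariant of markings. -/
def GoodM (L : List (ℕ × ℕ)) : Prop :=
  (∀ q ∈ L, 0 < q.2) ∧
  (∀ x mx y my, (x, mx) ∈ L → (y, my) ∈ L → y < x → conflict x y = true → mx ≠ my) ∧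
  (∀ x mx m', (x, mx) ∈ L → 0 < m' → m' < mx →
    ∃ b, (b, m') ∈ L ∧ b ≤ x ∧ conflict x b = true)

lemma ggAux_fst : ∀ (l : List ℕ) (acc : List (ℕ × ℕ)),
    (ggAux acc l).map Prod.fst = l.reverse ++ acc.map Prod.fst := by
  intro l
  induction l with
  | nil => intro acc; simp [ggAux]
  | cons a rest ih => intro acc; simp [ggAux, ih]

lemma ggAux_good : ∀ (l : List ℕ) (acc : List (ℕ × ℕ)),
    l.Pairwise (· ≤ ·) → (∀ q ∈ acc, ∀ y ∈ l, q.1 ≤ y) → GoodM acc → GoodM (ggAux acc l) := by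
  intro l
  induction l with
  | nil => intro acc _ _ h; exact h
  | cons a rest ih =>
    intro acc hs hle hg
    rw [ggAux]
    apply ih
    · exact hs.of_cons
    · intro q hq y hy
      rcases List.mem_cons.1 hq with h | h
      · rw [h]
        exact (List.rel_of_pairwise_cons hs hy)
      · exact hle q h y (List.mem_cons_of_mem _ hy)
    · refine ⟨?_, ?_, ?_⟩
      · intro q hq
        rcases List.mem_cons.1 hq with h | h
        · rw [h]; exact mex1_pos _
        · exact hg.1 q h
      · intro x mx y my hx hy hyx hc
        rcases List.mem_cons.1 hx with h | h
        · have h1 : x = a := congrArg Prod.fst h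
          have h2 : mx = mex1 ((acc.filter fun q => conflict a q.1).map Prod.snd) :=
            congrArg Prod.snd h
          rcases List.mem_cons.1 hy with h' | h'
          · have h1' : y = a := congrArg Prod.fst h'
            omega
          · intro hEq
            have hmem : my ∈ (acc.filter fun q => conflict a q.1).map Prod.snd :=
              List.mem_map.2 ⟨(y, my), List.mem_filter.2 ⟨h', by rw [← h1]; exact hc⟩, rfl⟩
            rw [← hEq, h2] at hmem
            exact absurd hmem (mex1_not_mem _)
        · rcases List.mem_cons.1 hy with h' | h'
          · have h1' : y = a := congrArg Prod.fst h'
            have := hle (x, mx) h a List.mem_cons_self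
            simp only at this
            omega
          · exact hg.2.1 x mx y my h h' hyx hc
      · intro x mx m' hx h0 hlt
        rcases List.mem_cons.1 hx with h | h
        · have h1 : x = a := congrArg Prod.fst h
          have h2 : mx = mex1 ((acc.filter fun q => conflict a q.1).map Prod.snd) :=
            congrArg Prod.snd h
          rw [h2] at hlt
          have hmem := mem_of_lt_mex1 h0 hlt
          obtain ⟨q, hq, hq2⟩ := List.mem_map.1 hmem
          obtain ⟨hqa, hqc⟩ := List.mem_filter.1 hq
          refine ⟨q.1, ?_, ?_, by rw [h1]; exact hqc⟩
          · rw [← hq2]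
            exact List.mem_cons_of_mem _ hqa
          · have := hle q hqa a List.mem_cons_self
            omega
        · obtain ⟨b, hb1, hb2, hb3⟩ := hg.2.2 x mx m' h h0 hlt
          exact ⟨b, List.mem_cons_of_mem _ hb1, hb2, hb3⟩

lemma ggMarks_good (π : Partition) : GoodM (ggMarks π) := by
  apply ggAux_good
  · exact List.pairwise_reverse.2 π.sorted
  · simp
  · exact ⟨by simp, by simp, by simp⟩

lemma ggMarks_fst (π : Partition) : (ggMarks π).map Prod.fst = π.parts := by
  simp [ggMarks, ggAux_fst]

lemma mem_parts_of_marked {π : Partition} {x m : ℕ} (h : (x, m) ∈ ggMarks π) :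
    x ∈ π.parts := by
  rw [← ggMarks_fst π]
  exact List.mem_map.2 ⟨(x, m), h, rfl⟩

lemma exists_mark {π : Partition} {x : ℕ} (h : x ∈ π.parts) :
    ∃ m, (x, m) ∈ ggMarks π := by
  rw [← ggMarks_fst π] at h
  obtain ⟨q, hq, hq2⟩ := List.mem_map.1 h
  exact ⟨q.2, by rwa [← hq2]⟩

lemma row_sorted (π : Partition) (i : ℕ) : (row π i).Pairwise (· ≥ ·) := by
  have h : (ggMarks π).Pairwise (fun a b : ℕ × ℕ => a.1 ≥ b.1) := by
    have := π.sorted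
    rw [← ggMarks_fst π] at this
    exact List.pairwise_map.mp this
  exact List.pairwise_map.mpr (h.filter _)

lemma mem_row_iff {π : Partition} {x i : ℕ} : x ∈ row π i ↔ (x, i) ∈ ggMarks π := by
  simp only [row, List.mem_map, List.mem_filter]
  constructor
  · rintro ⟨q, ⟨hq, hq2⟩, rfl⟩
    have : q.2 = i := by simpa using hq2
    rwa [← this, Prod.mk.eta]
  · intro h
    exact ⟨(x, i), ⟨h, by simp⟩, rfl⟩

end Aux
section Aux2

lemma natE_ne_top (n : ℕ) : natE n ≠ ⊤ := by simp [natE, EReal.natCast_ne_top]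

lemma natE_ne_bot (n : ℕ) : natE n ≠ ⊥ := by simp [natE, EReal.natCast_ne_bot]

lemma natE_lt_natE {a b : ℕ} : natE a < natE b ↔ a < b := by
  rw [natE, natE, EReal.coe_lt_coe_iff]
  exact_mod_cast Iff.rfl

lemma natE_inj {a b : ℕ} (h : natE a = natE b) : a = b := by
  rw [natE, natE] at h
  exact_mod_cast EReal.coe_eq_coe_iff.1 h

lemma rowVal_eq_natE {π : Partition} {i j n : ℕ} (hj : j ≠ 0) (h : rowVal π i j = natE n) :
    (row π i)[j-1]? = some n := by
  rw [rowVal, if_neg hj] at h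
  cases hgr : (row π i)[j-1]? with
  | none => rw [hgr] at h; exact absurd h (by simp [natE, (EReal.natCast_ne_bot _).symm])
  | some x =>
      rw [hgr] at h
      rw [natE_inj h]

lemma rowVal_of_getElem {π : Partition} {i j n : ℕ} (hj : j ≠ 0)
    (h : (row π i)[j-1]? = some n) : rowVal π i j = natE n := by
  rw [rowVal, if_neg hj, h]

lemma conflict_even {a b : ℕ} (ha : a % 2 = 0) (hab : a - b ≤ 2) : conflict a b = true := by
  rw [conflict, if_neg (by omega)]
  exact decide_eq_true hab

lemma conflict_even_le {a b : ℕ} (ha : a % 2 = 0) (h : conflict a b = true) : a - b ≤ 2 := by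
  rw [conflict, if_neg (by omega)] at h
  exact of_decide_eq_true h

lemma marked_of_startType_three {π : Partition} {b : ℕ} (h : startType π (b+1) = 3) :
    Marked π (nth π 2 (b+1)) 1 := by
  by_cases h5 : Marked π (nth π 2 (b+1)) 1
  · exact h5
  · exfalso
    rw [startType, startPair] at h
    split_ifs at h <;> simp_all <;> split_ifs at h <;> simp_all

lemma marked_of_startType_low {π : Partition} {b : ℕ}
    (h : startType π (b+1) = 0 ∨ startType π (b+1) = 1) :
    Marked π (nth π 2 (b+1) - 1) 1 ∨ Marked π (nth π 2 (b+1) - 2) 1 := by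
  by_cases hA : Marked π (nth π 2 (b+1) - 1) 1
  · exact Or.inl hA
  by_cases hB : Marked π (nth π 2 (b+1) - 2) 1
  · exact Or.inr hB
  exfalso
  rw [startType, startPair] at h
  rcases h with h | h <;> (split_ifs at h <;> simp_all <;> split_ifs at h <;> simp_all)

end Aux2

/-- Proposition 2.10 (2): if `π ∈ C_<(k,r|p,t)` with `π^{(2)}_p = 2t + 4` of
starting type `s₃`, then `2t + 2` does not occur in `π`. -/
theorem two_t_plus_two_not_occur (k r p t : ℕ) (hrk : r ≤ k) (hr : 3 ≤ r)
    (π : Partition) (hπ : π ∈ Clt k r p t)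
    (hval : rowVal π 2 p = natE (2 * t + 4)) (hst : startType π p = 3) :
    (2 * t + 2) ∉ π.parts := by
  obtain ⟨hC, hodd, hlt1, hlt2, hc5, hc6⟩ := hπ
  obtain ⟨G1, G2, G3⟩ := ggMarks_good π
  intro hmem
  -- p ≥ 1
  have hp0 : p ≠ 0 := by
    intro h
    rw [h, rowVal, if_pos rfl] at hval
    exact natE_ne_top _ hval.symm
  obtain ⟨q, rfl⟩ : ∃ q, p = q + 1 := ⟨p - 1, by omega⟩
  set p := q + 1 with hp
  have hrowp : (row π 2)[p-1]? = some (2*t+4) := rowVal_eq_natE hp0 hval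
  obtain ⟨hplen, hpe⟩ := List.getElem?_eq_some_iff.1 hrowp
  -- the 1-marked 2t+4
  have hnthp : nth π 2 p = 2*t+4 := by
    rw [nth, List.getD_eq_getElem?_getD, hrowp]
    rfl
  have hM4 : (2*t+4, 1) ∈ ggMarks π := by
    have := marked_of_startType_three (b := q) hst
    rwa [hnthp] at this
  -- no copy of 2t+2 is 1-marked
  have h2t2_ne1 : ∀ m, (2*t+2, m) ∈ ggMarks π → m ≠ 1 := by
    intro m hm hm1
    subst hm1
    exact G2 (2*t+4) 1 (2*t+2) 1 hM4 hm (by omega) (conflict_even (by omega) (by omega)) rfl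
  -- sorted access on row 2
  have hsor := List.pairwise_iff_getElem.1 (row_sorted π 2)
  have key2 : ∀ x, (x, 2) ∈ ggMarks π → x ≤ 2*t+2 →
      ∃ y, (row π 2)[p]? = some y ∧ x ≤ y ∧ y < 2*t+1 := by
    intro x hx hxle
    obtain ⟨j, hj, hjx⟩ := List.mem_iff_getElem.1 (mem_row_iff.2 hx)
    have hjx' : (row π 2)[j]? = some x := by rw [List.getElem?_eq_getElem hj, hjx]
    have hpj : p - 1 < j := by
      rcases Nat.lt_trichotomy j (p-1) with h | h | h
      · have := hsor j (p-1) hj hplen h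
        rw [hjx, hpe] at this
        omega
      · rw [h, hrowp] at hjx'
        simp at hjx'
        omega
      · exact h
    have hp2 : p < (row π 2).length := by omega
    have hpq : (row π 2)[p]? = some ((row π 2)[p]) := List.getElem?_eq_getElem hp2
    refine ⟨(row π 2)[p], hpq, ?_, ?_⟩
    · rcases Nat.lt_or_ge p j with h | h
      · have := hsor p j hp2 hj h
        rw [hjx] at this
        exact this
      · have hjp : j = p := by omega
        rw [hjp, hpq] at hjx'
        simp at hjx'
        omega
    · have hrv : rowVal π 2 (p+1) = natE ((row π 2)[p]) :=
        rowVal_of_getElem (by omega) (by simpa using hpq)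
      rw [hrv] at hlt1
      exact natE_lt_natE.1 hlt1
  -- no copy of 2t+2 is 2-marked
  have h2t2_ne2 : ∀ m, (2*t+2, m) ∈ ggMarks π → m ≠ 2 := by
    intro m hm hm2
    subst hm2
    obtain ⟨y, _, hxy, hylt⟩ := key2 _ hm le_rfl
    omega
  -- the mark of 2t+2 is at least 3
  obtain ⟨m, hm⟩ := exists_mark hmem
  have hm3 : 3 ≤ m := by
    have h0 := G1 _ hm
    have h1 := h2t2_ne1 m hm
    have h2 := h2t2_ne2 m hm
    simp only at h0
    omega
  -- there are 1- and 2-marked parts equal to 2t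
  have get2t : ∀ m', m' = 1 ∨ m' = 2 → (2*t, m') ∈ ggMarks π := by
    intro m' hm'
    obtain ⟨b, hb1, hb2, hb3⟩ := G3 _ _ m' hm (by omega) (by omega)
    have hble : 2*t ≤ b := by
      have := conflict_even_le (by omega) hb3
      omega
    have hbp := mem_parts_of_marked hb1
    have hbeven : b % 2 = 0 := by
      by_contra h
      have := hodd b hbp (by omega)
      omega
    have hb2t : b = 2*t ∨ b = 2*t+2 := by omega
    rcases hb2t with rfl | rfl
    · exact hb1
    · exfalso
      rcases hm' with rfl | rfl
      · exact h2t2_ne1 _ hb1 rfl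
      · exact h2t2_ne2 _ hb1 rfl
  have h2t1 := get2t 1 (Or.inl rfl)
  have h2t2' := get2t 2 (Or.inr rfl)
  have ht1 : 1 ≤ t := by
    have := π.pos _ (mem_parts_of_marked h2t1)
    omega
  -- the (p+1)-st 2-marked part is 2t
  obtain ⟨y, hy, hxy, hylt⟩ := key2 _ h2t2' (by omega)
  have hy2t : y = 2*t := by omega
  subst hy2t
  have hrv : rowVal π 2 (p+1) = natE (2*t) :=
    rowVal_of_getElem (by omega) (by simpa using hy)
  have hnth1 : nth π 2 (p+1) = 2*t := by
    rw [nth, List.getD_eq_getElem?_getD]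
    simp only [Nat.add_sub_cancel]
    rw [hy]
    rfl
  have hlow := marked_of_startType_low (b := p) (hc6 hrv)
  rw [hnth1] at hlow
  rcases hlow with h | h
  · exact G2 (2*t) 1 (2*t-1) 1 h2t1 h (by omega) (conflict_even (by omega) (by omega)) rfl
  · exact G2 (2*t) 1 (2*t-2) 1 h2t1 h (by omega) (conflict_even (by omega) (by omega)) rfl

end Bressoud
end

section
/- For k ≥ r ≥ 1 and t ≥ 0, let π be a partition in C(k,r) such that 2t+1 and 2t+2 both occur as parts of π. Then every part of π equal to 2t+2 has a mark in GG(π) strictly greater than the mark of 2t+1 in GG(π). -/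
namespace Bressoud

lemma mem_of_lt_mex1_s10 {s : List ℕ} {j : ℕ} (h1 : 0 < j) (h2 : j < mex1 s) : j ∈ s := by
  by_contra h
  exact Nat.find_min (exists_pos_not_mem s) h2 ⟨h1, h⟩

lemma conflict_even_iff (t q : ℕ) : conflict (2 * t + 2) q = true ↔ 2 * t ≤ q := by
  have h : (2 * t + 2) % 2 = 0 := by omega
  simp only [conflict, h]
  norm_num
  omega

lemma conflict_odd_iff (t q : ℕ) : conflict (2 * t + 1) q = true ↔ 2 * t ≤ q := by
  have h : (2 * t + 1) % 2 = 1 := by omega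
  simp only [conflict, h]
  norm_num
  omega

lemma mark_mem_iff (acc : List (ℕ × ℕ)) (p j : ℕ) :
    j ∈ (acc.filter fun q => conflict p q.1).map Prod.snd ↔
      ∃ q ∈ acc, conflict p q.1 = true ∧ q.2 = j := by
  simp only [List.mem_map, List.mem_filter]
  constructor
  · rintro ⟨q, ⟨hq, hc⟩, hj⟩; exact ⟨q, hq, hc, hj⟩
  · rintro ⟨q, hq, hc, hj⟩; exact ⟨q, ⟨hq, hc⟩, hj⟩

lemma mem_acc_of_not_mem :
    ∀ (s : List ℕ) (acc : List (ℕ × ℕ)) (x m : ℕ),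
      (x, m) ∈ ggAux acc s → x ∉ s → (x, m) ∈ acc := by
  intro s
  induction s with
  | nil => intro acc x m h _; simpa [ggAux] using h
  | cons p rest ih =>
    intro acc x m h hx
    rw [ggAux] at h
    have hx1 : x ∉ rest := fun hh => hx (List.mem_cons_of_mem _ hh)
    have := ih _ x m h hx1
    rcases List.mem_cons.1 this with h' | h'
    · obtain ⟨rfl, rfl⟩ := Prod.mk.inj h'
      exact absurd List.mem_cons_self hx
    · exact h'

lemma phase2 (t m' : ℕ) :
    ∀ (s : List ℕ) (acc : List (ℕ × ℕ)),
    (∀ j, 1 ≤ j → j ≤ m' → ∃ q ∈ acc, conflict (2 * t + 2) q.1 = true ∧ q.2 = j) →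
    (∀ m, (2 * t + 2, m) ∈ acc → m' < m) →
    ∀ m, (2 * t + 2, m) ∈ ggAux acc s → m' < m := by
  intro s
  induction s with
  | nil => intro acc _ hm m hmem; exact hm m (by simpa [ggAux] using hmem)
  | cons p rest ih =>
    intro acc hg hm m hmem
    rw [ggAux] at hmem
    set M := mex1 ((acc.filter fun q => conflict p q.1).map Prod.snd) with hMdef
    refine ih _ ?_ ?_ m hmem
    · intro j h1 h2
      obtain ⟨q, hq, hc, hj⟩ := hg j h1 h2
      exact ⟨q, List.mem_cons_of_mem _ hq, hc, hj⟩
    · intro m2 hm2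
      rcases List.mem_cons.1 hm2 with h | h
      · obtain ⟨hp, hm2M⟩ := Prod.mk.inj h
        subst hm2M
        subst hp
        by_contra hle
        push_neg at hle
        have hM1 : 0 < M := mex1_pos _
        obtain ⟨q, hq, hc, hj⟩ := hg M hM1 hle
        exact mex1_not_mem _ ((mark_mem_iff acc (2 * t + 2) M).2 ⟨q, hq, hc, hj⟩)
      · exact hm m2 h

lemma phase1 (t : ℕ) :
    ∀ (s : List ℕ) (acc : List (ℕ × ℕ)), s.Pairwise (· ≤ ·) →
    (∀ q ∈ acc, q.1 < 2 * t + 1) →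
    (2 * t + 1) ∈ s → s.count (2 * t + 1) ≤ 1 →
    ∀ m m', (2 * t + 2, m) ∈ ggAux acc s → (2 * t + 1, m') ∈ ggAux acc s → m' < m := by
  intro s
  induction s with
  | nil => intro _ _ _ h; exact absurd h List.not_mem_nil
  | cons p rest ih =>
    intro acc hsort hacc hmem1 hcount m m' hm hm'
    have hsort' : rest.Pairwise (· ≤ ·) := hsort.of_cons
    have hple : ∀ x ∈ rest, p ≤ x := fun x hx => List.rel_of_pairwise_cons hsort hx
    rw [ggAux] at hm hm'
    set M := mex1 ((acc.filter fun q => conflict p q.1).map Prod.snd) with hMdef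
    by_cases hp : p = 2 * t + 1
    · subst hp
      -- invariant for phase2
      have hgood : ∀ j, 1 ≤ j → j ≤ M →
          ∃ q ∈ ((2 * t + 1, M) :: acc), conflict (2 * t + 2) q.1 = true ∧ q.2 = j := by
        intro j h1 h2
        rcases eq_or_lt_of_le h2 with rfl | hlt
        · exact ⟨(2 * t + 1, M), List.mem_cons_self,
            (conflict_even_iff t (2 * t + 1)).2 (by omega), rfl⟩
        · obtain ⟨q, hq, hc, hj⟩ :=
            (mark_mem_iff acc (2 * t + 1) j).1 (mem_of_lt_mex1_s10 h1 hlt)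
          refine ⟨q, List.mem_cons_of_mem _ hq, ?_, hj⟩
          exact (conflict_even_iff t q.1).2 ((conflict_odd_iff t q.1).1 hc)
      have hnone : ∀ m2, (2 * t + 2, m2) ∈ ((2 * t + 1, M) :: acc) → M < m2 := by
        intro m2 hm2
        rcases List.mem_cons.1 hm2 with h | h
        · obtain ⟨h, -⟩ := Prod.mk.inj h
          omega
        · have := hacc _ h
          simp only at this
          omega
      -- m' must equal M
      have hnotmem : (2 * t + 1) ∉ rest := by
        have : List.count (2 * t + 1) ((2 * t + 1) :: rest) =
            List.count (2 * t + 1) rest + 1 := by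
          simp [List.count_cons]
        by_contra hmemr
        have := List.count_pos_iff.2 hmemr
        omega
      have hm'M : m' = M := by
        have := mem_acc_of_not_mem rest _ _ _ hm' hnotmem
        rcases List.mem_cons.1 this with h | h
        · exact (Prod.mk.inj h).2
        · have := hacc _ h
          simp only at this
          omega
      rw [hm'M]
      exact phase2 t M rest _ hgood hnone m hm
    · have hmem1' : (2 * t + 1) ∈ rest := by
        rcases List.mem_cons.1 hmem1 with h | h
        · exact absurd h.symm hp
        · exact h
      have hplt : p < 2 * t + 1 := lt_of_le_of_ne (hple _ hmem1') hp
      have hacc' : ∀ q ∈ ((p, M) :: acc), q.1 < 2 * t + 1 := by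
        intro q hq
        rcases List.mem_cons.1 hq with h | h
        · rw [h]; exact hplt
        · exact hacc _ h
      have hcount' : rest.count (2 * t + 1) ≤ 1 := by
        have : List.count (2 * t + 1) (p :: rest) = List.count (2 * t + 1) rest := by
          simp [List.count_cons, Ne.symm hp, hp]
        omega
      exact ih _ hsort' hacc' hmem1' hcount' m m' hm hm'

/-- Lemma 2.11: if `π ∈ C(k,r)` and both `2t+1` and `2t+2` occur in `π`, then
the marks of the parts `2t+2` in `GG(π)` are greater than the mark of `2t+1`. -/
theorem marks_of_even_gt (k r t : ℕ) (hrk : r ≤ k) (hr : 1 ≤ r)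
    (π : Partition) (hπ : π ∈ C k r)
    (h1 : (2 * t + 1) ∈ π.parts) (h2 : (2 * t + 2) ∈ π.parts) :
    ∀ m m', Marked π (2 * t + 2) m → Marked π (2 * t + 1) m' → m' < m := by
  intro m m' hm hm'
  have hsort : π.parts.reverse.Pairwise (· ≤ ·) := by
    rw [List.pairwise_reverse]
    exact π.sorted
  have hmem1 : (2 * t + 1) ∈ π.parts.reverse := List.mem_reverse.2 h1
  have hcount : π.parts.reverse.count (2 * t + 1) ≤ 1 := by
    rw [(π.parts.reverse_perm).count_eq]
    exact hπ.1 (2 * t + 1) (by omega)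
  exact phase1 t π.parts.reverse [] hsort (by simp) hmem1 hcount m m' hm hm'

end Bressoud
end
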